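/- Let R be a commutative ring and let f : A → B be a pure monomorphism of R-modules. Then the induced R-linear map f⁺ : B⁺ → A⁺ between character modules, given by precomposition with f, is a split epimorphism: it is surjective and admits an R-linear section. -/

import Mathlib

universe u

open TensorProduct

/-- A pure monomorphism of `R`-modules: an injective `R`-linear map `f : A → B` such that
for every `R`-module `Q` the induced map `Q ⊗[R] A → Q ⊗[R] B` is injective. -/
def IsPureMono {R : Type u} [CommRing R] {A B : Type u}
    [AddCommGroup A] [AddCommGroup B] [Module R A] [Module R B]
    (f : A →ₗ[R] B) : Prop :=
  Function.Injective f ∧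
    ∀ (Q : Type u) [AddCommGroup Q] [Module R Q],
      Function.Injective (LinearMap.lTensor Q f)

/-- An `R`-module `P` is pure injective if every `R`-linear map `A → P` extends along
every pure monomorphism `A → B`. -/
def IsPureInjective (R : Type u) [CommRing R] (P : Type u)
    [AddCommGroup P] [Module R P] : Prop :=
  ∀ ⦃A B : Type u⦄ [AddCommGroup A] [AddCommGroup B] [Module R A] [Module R B]
    (f : A →ₗ[R] B), IsPureMono f → ∀ g : A →ₗ[R] P, ∃ h : B →ₗ[R] P, h ∘ₗ f = g

/-- An `R`-module `M` is absolutely pure if every injective `R`-linear map with domain `M`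
is a pure monomorphism. -/
def IsAbsolutelyPure (R : Type u) [CommRing R] (M : Type u)
    [AddCommGroup M] [Module R M] : Prop :=
  ∀ (N : Type u) [AddCommGroup N] [Module R N] (f : M →ₗ[R] N),
    Function.Injective f → IsPureMono f

/-- An `R`-module `C` is cotorsion if every short exact sequence `0 → C → G → F' → 0`
with flat `F'` splits. -/
def IsCotorsion (R : Type u) [CommRing R] (C : Type u)
    [AddCommGroup C] [Module R C] : Prop :=
  ∀ (G : Type u) [AddCommGroup G] [Module R G] (i : C →ₗ[R] G),
    Function.Injective i → Module.Flat R (G ⧸ LinearMap.range i) →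
      ∃ r : G →ₗ[R] C, r ∘ₗ i = LinearMap.id

/-- The canonical evaluation map from a module to its double character module. -/
def evalCharacterHom (R : Type u) [CommRing R] (M : Type u)
    [AddCommGroup M] [Module R M] :
    M →ₗ[R] CharacterModule (CharacterModule M) where
  toFun m :=
    { toFun := fun φ => φ m
      map_zero' := rfl
      map_add' := fun _ _ => rfl }
  map_add' m n := by ext φ; exact map_add φ m n
  map_smul' r m := by
    ext φ
    show φ (r • m) = (r • φ) m
    rw [CharacterModule.smul_apply]

/-- If `f : A → B` is a pure monomorphism, then the induced map `f⁺ : B⁺ → A⁺` between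
character modules is a split epimorphism. -/
theorem characterModule_dual_split_epi_of_pureMono
    (R : Type u) [CommRing R]
    (A B : Type u) [AddCommGroup A] [Module R A] [AddCommGroup B] [Module R B]
    (f : A →ₗ[R] B) (hf : IsPureMono f) :
    Function.Surjective (CharacterModule.dual f) ∧
      ∃ s : CharacterModule A →ₗ[R] CharacterModule B,
        CharacterModule.dual f ∘ₗ s = LinearMap.id := by

  have hsec : ∃ s : CharacterModule A →ₗ[R] CharacterModule B,
      CharacterModule.dual f ∘ₗ s = LinearMap.id := by
    set Q := CharacterModule A
    -- the evaluation character on Q ⊗ A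
    let e : CharacterModule (Q ⊗[R] A) := CharacterModule.uncurry LinearMap.id
    have hinj : Function.Injective (LinearMap.lTensor Q f) := hf.2 Q
    obtain ⟨ψ, hψ⟩ := CharacterModule.dual_surjective_of_injective
      (LinearMap.lTensor Q f) hinj e
    refine ⟨CharacterModule.curry ψ, ?_⟩
    ext φ a
    have h1 : ψ (φ ⊗ₜ[R] f a) = e (φ ⊗ₜ[R] a) := by
      have := congrArg (fun c => c (φ ⊗ₜ[R] a)) hψ
      exact this
    exact h1
  refine ⟨?_, hsec⟩
  obtain ⟨s, hs⟩ := hsec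
  intro φ
  exact ⟨s φ, congrArg (fun g => g φ) hs⟩
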